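/- Let M be a perfect matching of G (n even) and let N be a set of n/6 edges of G, none belonging to M, such that no edge of M contains an endpoint of more than one edge of N. Then there exists a perfect 3-path packing P of G with w(P) ≥ w(M) + c(N). -/

import Mathlib

open Finset
open scoped Classical

namespace MW3PP

/-- A 3-path `xyz`: a path on three distinct vertices with middle vertex `y`. -/
structure P3 (V : Type*) where
  x : V
  y : V
  z : V
  hxy : x ≠ y
  hyz : y ≠ z
  hxz : x ≠ z

variable {V : Type*} [Fintype V] [DecidableEq V]

/-- The vertex set of a 3-path. -/
def P3.verts (p : P3 V) : Finset V := {p.x, p.y, p.z}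

/-- The two edges of a 3-path. -/
def P3.edges (p : P3 V) : Finset (Sym2 V) := {s(p.x, p.y), s(p.y, p.z)}

/-- The weight of a 3-path. -/
def P3.wt (w : Sym2 V → ℝ) (p : P3 V) : ℝ := w s(p.x, p.y) + w s(p.y, p.z)

/-- The total weight of a set of edges. -/
def ew (w : Sym2 V → ℝ) (F : Finset (Sym2 V)) : ℝ := ∑ e ∈ F, w e

/-- The total weight of a set of 3-paths. -/
def pw (w : Sym2 V → ℝ) (P : Finset (P3 V)) : ℝ := ∑ p ∈ P, p.wt w

/-- `∑_{xyz ∈ S} max (w (xy)) (w (yz))`. -/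
def maxSum (w : Sym2 V → ℝ) (S : Finset (P3 V)) : ℝ :=
  ∑ p ∈ S, max (w s(p.x, p.y)) (w s(p.y, p.z))

/-- A perfect 3-path packing: `n/3` pairwise vertex-disjoint 3-paths covering all vertices. -/
def IsPacking (P : Finset (P3 V)) : Prop :=
  P.card = Fintype.card V / 3 ∧
  (∀ p ∈ P, ∀ q ∈ P, p ≠ q → Disjoint p.verts q.verts) ∧
  (∀ v : V, ∃ p ∈ P, v ∈ p.verts)

/-- A maximum-weight perfect 3-path packing. -/
def IsMaxPacking (w : Sym2 V → ℝ) (P : Finset (P3 V)) : Prop :=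
  IsPacking P ∧ ∀ Q : Finset (P3 V), IsPacking Q → pw w Q ≤ pw w P

/-- A matching: a set of pairwise vertex-disjoint (non-loop) edges. -/
def IsMatching (M : Finset (Sym2 V)) : Prop :=
  (∀ e ∈ M, ¬ e.IsDiag) ∧
  ∀ e ∈ M, ∀ f ∈ M, e ≠ f → ∀ v : V, v ∈ e → v ∉ f

/-- A maximum-weight matching among all matchings of size `k`. -/
def IsMaxMatchingOfSize (w : Sym2 V → ℝ) (k : ℕ) (M : Finset (Sym2 V)) : Prop :=
  IsMatching M ∧ M.card = k ∧
  ∀ M' : Finset (Sym2 V), IsMatching M' → M'.card = k → ew w M' ≤ ew w M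

/-- `v ∈ V(M)` : vertex `v` is covered by the matching `M`. -/
def covered (M : Finset (Sym2 V)) (v : V) : Prop := ∃ e ∈ M, v ∈ e

/-- `e_u` : the edge of `M` containing `u` (junk value if there is none). -/
noncomputable def eMatch (M : Finset (Sym2 V)) (u : V) : Sym2 V :=
  if h : ∃ e ∈ M, u ∈ e then h.choose else s(u, u)

/-- The cost `c` of an edge with respect to a matching `M`:
`c(uv) = w(uv) - min (w (e_u)) (w (e_v))` if both endpoints are covered by `M`,
and `c(uv) = w(uv)` otherwise. -/
noncomputable def cost (w : Sym2 V → ℝ) (M : Finset (Sym2 V)) : Sym2 V → ℝ :=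
  Sym2.lift ⟨fun u v =>
    if covered M u ∧ covered M v then
      w s(u, v) - min (w (eMatch M u)) (w (eMatch M v))
    else w s(u, v), by
      intro u v
      dsimp only
      by_cases h : covered M u ∧ covered M v
      · rw [if_pos h, if_pos (show covered M v ∧ covered M u from ⟨h.2, h.1⟩),
          Sym2.eq_swap, min_comm]
      · rw [if_neg h, if_neg (show ¬(covered M v ∧ covered M u) from fun h' => h ⟨h'.2, h'.1⟩),
          Sym2.eq_swap]⟩

/-- The total cost of a set of edges. -/
noncomputable def cw (w : Sym2 V → ℝ) (M F : Finset (Sym2 V)) : ℝ := ∑ e ∈ F, cost w M e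

/-- The number of vertices of the 3-path `p` covered by `M`. -/
noncomputable def kcnt (M : Finset (Sym2 V)) (p : P3 V) : ℕ :=
  (p.verts.filter fun v => covered M v).card

/-- Exactly one of the two edges of `p` lies in `M`. -/
def exOne (M : Finset (Sym2 V)) (p : P3 V) : Prop :=
  (s(p.x, p.y) ∈ M ∧ s(p.y, p.z) ∉ M) ∨ (s(p.x, p.y) ∉ M ∧ s(p.y, p.z) ∈ M)

def cls1 (M : Finset (Sym2 V)) (p : P3 V) : Prop := kcnt M p = 0
def cls2 (M : Finset (Sym2 V)) (p : P3 V) : Prop := kcnt M p = 1 ∧ ¬ covered M p.y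
def cls3 (M : Finset (Sym2 V)) (p : P3 V) : Prop := kcnt M p = 1 ∧ covered M p.y
def cls4 (M : Finset (Sym2 V)) (p : P3 V) : Prop := kcnt M p = 2 ∧ ¬ covered M p.y
def cls5 (M : Finset (Sym2 V)) (p : P3 V) : Prop := kcnt M p = 2 ∧ covered M p.y ∧ exOne M p
def cls6 (M : Finset (Sym2 V)) (p : P3 V) : Prop :=
  kcnt M p = 2 ∧ covered M p.y ∧ s(p.x, p.y) ∉ M ∧ s(p.y, p.z) ∉ M
def cls7 (M : Finset (Sym2 V)) (p : P3 V) : Prop := kcnt M p = 3 ∧ exOne M p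
def cls8 (M : Finset (Sym2 V)) (p : P3 V) : Prop :=
  kcnt M p = 3 ∧ s(p.x, p.y) ∉ M ∧ s(p.y, p.z) ∉ M

/-- The subset of a set of 3-paths satisfying a predicate. -/
noncomputable def psel (P : Finset (P3 V)) (c : P3 V → Prop) : Finset (P3 V) := P.filter c

/-- The set of all edges of the 3-paths in `S`. -/
def Esub (S : Finset (P3 V)) : Finset (Sym2 V) := S.biUnion P3.edges

/-- The heaviest edge of a 3-path (the edge `xy` in case of a tie). -/
noncomputable def heavy (w : Sym2 V → ℝ) (p : P3 V) : Sym2 V :=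
  if w s(p.y, p.z) ≤ w s(p.x, p.y) then s(p.x, p.y) else s(p.y, p.z)

noncomputable def X1 (w : Sym2 V → ℝ) (P : Finset (P3 V)) (M : Finset (Sym2 V)) :
    Finset (Sym2 V) := (psel P (cls1 M)).image (heavy w)
noncomputable def X2 (P : Finset (P3 V)) (M : Finset (Sym2 V)) : Finset (Sym2 V) :=
  (psel P (cls2 M)).image fun p => if covered M p.x then s(p.x, p.y) else s(p.y, p.z)
noncomputable def X3 (w : Sym2 V → ℝ) (P : Finset (P3 V)) (M : Finset (Sym2 V)) :
    Finset (Sym2 V) := (psel P (cls3 M)).image (heavy w)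
noncomputable def X4 (w : Sym2 V → ℝ) (P : Finset (P3 V)) (M : Finset (Sym2 V)) :
    Finset (Sym2 V) := (psel P (cls4 M)).image (heavy w)
noncomputable def X5 (P : Finset (P3 V)) (M : Finset (Sym2 V)) : Finset (Sym2 V) :=
  (psel P (cls5 M)).image fun p => if s(p.x, p.y) ∈ M then s(p.y, p.z) else s(p.x, p.y)
noncomputable def X6 (P : Finset (P3 V)) (M : Finset (Sym2 V)) : Finset (Sym2 V) :=
  (psel P (cls6 M)).image fun p => if covered M p.x then s(p.y, p.z) else s(p.x, p.y)
noncomputable def X7 (P : Finset (P3 V)) (M : Finset (Sym2 V)) : Finset (Sym2 V) :=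
  (psel P (cls7 M)).image fun p => if s(p.x, p.y) ∈ M then s(p.y, p.z) else s(p.x, p.y)
noncomputable def X8 (w : Sym2 V → ℝ) (P : Finset (P3 V)) (M : Finset (Sym2 V)) :
    Finset (Sym2 V) := (psel P (cls8 M)).image (heavy w)

noncomputable def Y1 (w : Sym2 V → ℝ) (P : Finset (P3 V)) (M : Finset (Sym2 V)) :
    Finset (Sym2 V) := Esub (psel P (cls1 M)) \ X1 w P M
noncomputable def Y2 (P : Finset (P3 V)) (M : Finset (Sym2 V)) : Finset (Sym2 V) :=
  Esub (psel P (cls2 M)) \ X2 P M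
noncomputable def Y3 (w : Sym2 V → ℝ) (P : Finset (P3 V)) (M : Finset (Sym2 V)) :
    Finset (Sym2 V) := Esub (psel P (cls3 M)) \ X3 w P M
noncomputable def Y4 (w : Sym2 V → ℝ) (P : Finset (P3 V)) (M : Finset (Sym2 V)) :
    Finset (Sym2 V) := Esub (psel P (cls4 M)) \ X4 w P M
noncomputable def Y5 (P : Finset (P3 V)) (M : Finset (Sym2 V)) : Finset (Sym2 V) :=
  Esub (psel P (cls5 M)) \ X5 P M
noncomputable def Y6 (P : Finset (P3 V)) (M : Finset (Sym2 V)) : Finset (Sym2 V) :=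
  Esub (psel P (cls6 M)) \ X6 P M
noncomputable def Y7 (P : Finset (P3 V)) (M : Finset (Sym2 V)) : Finset (Sym2 V) :=
  Esub (psel P (cls7 M)) \ X7 P M
noncomputable def Y8 (w : Sym2 V → ℝ) (P : Finset (P3 V)) (M : Finset (Sym2 V)) :
    Finset (Sym2 V) := Esub (psel P (cls8 M)) \ X8 w P M

/-- An edge is a middle edge (w.r.t. `M`) if exactly one of its endpoints lies in `V(M)`. -/
def isMiddle (M : Finset (Sym2 V)) (e : Sym2 V) : Prop :=
  ∃ u v : V, e = s(u, v) ∧ covered M u ∧ ¬ covered M v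

/-- Two edges share a vertex. -/
def shares (e f : Sym2 V) : Prop := ∃ v, v ∈ e ∧ v ∈ f

/-- `g` is a middle edge of some 3-path in `S`. -/
def middleIn (M : Finset (Sym2 V)) (S : Finset (P3 V)) (g : Sym2 V) : Prop :=
  (∃ p ∈ S, g ∈ p.edges) ∧ isMiddle M g

/-- The 3-paths of `P` lying in classes 2, 3 or 4. -/
noncomputable def P234 (P : Finset (P3 V)) (M : Finset (Sym2 V)) : Finset (P3 V) :=
  psel P fun p => cls2 M p ∨ cls3 M p ∨ cls4 M p

/-- `M_1`: edges of `M` sharing a vertex with at least one middle edge of a 3-path of `P*_6`. -/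
noncomputable def Mset1 (P : Finset (P3 V)) (M : Finset (Sym2 V)) : Finset (Sym2 V) :=
  M.filter fun f => ∃ g, middleIn M (psel P (cls6 M)) g ∧ shares f g

/-- `M_2`: edges of `M` sharing a vertex with at least one middle edge, all middle edges met
belonging to 3-paths of `P*_2 ∪ P*_3 ∪ P*_4`. -/
noncomputable def Mset2 (P : Finset (P3 V)) (M : Finset (Sym2 V)) : Finset (Sym2 V) :=
  M.filter fun f =>
    (∃ g, middleIn M P g ∧ shares f g) ∧
    ∀ g, middleIn M P g → shares f g → middleIn M (P234 P M) g

/-- `M_3 = M ∩ E(P*_7)`. -/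
noncomputable def Mset3 (P : Finset (P3 V)) (M : Finset (Sym2 V)) : Finset (Sym2 V) :=
  M ∩ Esub (psel P (cls7 M))

/-- `M_4 = M ∩ E(P*_5)`. -/
noncomputable def Mset4 (P : Finset (P3 V)) (M : Finset (Sym2 V)) : Finset (Sym2 V) :=
  M ∩ Esub (psel P (cls5 M))

/-- The middle edges of 3-paths of `P*_6`. -/
noncomputable def mid6 (P : Finset (P3 V)) (M : Finset (Sym2 V)) : Finset (Sym2 V) :=
  (Esub (psel P (cls6 M))).filter (isMiddle M)

/-- `M'_1`: edges of `M_1` meeting exactly one middle edge of a 3-path of `P*_6` and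
no middle edge of a 3-path of `P*_2 ∪ P*_3 ∪ P*_4`. -/
noncomputable def Mset1' (P : Finset (P3 V)) (M : Finset (Sym2 V)) : Finset (Sym2 V) :=
  (Mset1 P M).filter fun f =>
    ((mid6 P M).filter fun g => shares f g).card = 1 ∧
    ∀ g, middleIn M (P234 P M) g → ¬ shares f g

/-- `M''_1`: edges of `M_1` meeting two middle edges of 3-paths of `P*_6`. -/
noncomputable def Mset1'' (P : Finset (P3 V)) (M : Finset (Sym2 V)) : Finset (Sym2 V) :=
  (Mset1 P M).filter fun f => ((mid6 P M).filter fun g => shares f g).card = 2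

/-- `M'''_1`: edges of `M_1` meeting exactly one middle edge of a 3-path of `P*_6` and
at least one middle edge of a 3-path of `P*_2 ∪ P*_3 ∪ P*_4`. -/
noncomputable def Mset1''' (P : Finset (P3 V)) (M : Finset (Sym2 V)) : Finset (Sym2 V) :=
  (Mset1 P M).filter fun f =>
    ((mid6 P M).filter fun g => shares f g).card = 1 ∧
    ∃ g, middleIn M (P234 P M) g ∧ shares f g

/-- Assumption on `P*`: for every 3-path `xyz ∈ P*` with `y ∉ V(M)` and `x, z ∈ V(M)`,
the vertices `x` and `z` lie in two distinct edges of `M`. -/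
def Ass (P : Finset (P3 V)) (M : Finset (Sym2 V)) : Prop :=
  ∀ p ∈ P, ¬ covered M p.y → covered M p.x → covered M p.z →
    ∃ e ∈ M, ∃ f ∈ M, p.x ∈ e ∧ p.z ∈ f ∧ e ≠ f

/-- An admissible edge w.r.t. `M`: either both endpoints are in `V(M)` and lie in two distinct
edges of `M`, or exactly one endpoint is in `V(M)`. -/
def goodEdge (M : Finset (Sym2 V)) (e : Sym2 V) : Prop :=
  (∃ u v : V, e = s(u, v) ∧ covered M u ∧ covered M v ∧ ∀ f ∈ M, ¬(u ∈ f ∧ v ∈ f)) ∨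
  (∃ u v : V, e = s(u, v) ∧ covered M u ∧ ¬ covered M v)


set_option maxHeartbeats 1000000 in
theorem statement_1 (n : ℕ) (hn : Fintype.card V = n) (h3 : 3 ∣ n) (h2 : 2 ∣ n)
    (w : Sym2 V → ℝ) (hw : ∀ e : Sym2 V, 0 ≤ w e)
    (M : Finset (Sym2 V)) (hM : IsMatching M) (hMcard : M.card = n / 2)
    (N : Finset (Sym2 V)) (hNcard : N.card = n / 6)
    (hNG : ∀ e ∈ N, ¬ e.IsDiag) (hNM : ∀ e ∈ N, e ∉ M)
    (hNsep : ∀ f ∈ M, ∀ e₁ ∈ N, ∀ e₂ ∈ N, shares f e₁ → shares f e₂ → e₁ = e₂) :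
    ∃ P : Finset (P3 V), IsPacking P ∧ ew w M + cw w M N ≤ pw w P := by
  classical
  obtain ⟨k, rfl⟩ : ∃ k, n = 6 * k := ⟨n / 6, by omega⟩
  -- basic matching facts
  have hMuniq : ∀ f ∈ M, ∀ f' ∈ M, ∀ x : V, x ∈ f → x ∈ f' → f = f' := by
    intro f hf f' hf' x hx hx'
    by_contra hne
    exact hM.2 f hf f' hf' hne x hx hx'
  have hMdisj : ∀ f ∈ M, ∀ f' ∈ M, f ≠ f' → ∀ x : V, x ∈ f → x ∉ f' :=
    fun f hf f' hf' hne x hx hx' => hne (hMuniq f hf f' hf' x hx hx')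
  have hrep : ∀ f : Sym2 V, ∃ a b : V, f = s(a, b) := by
    intro f
    induction f using Sym2.ind with
    | _ a b => exact ⟨a, b, rfl⟩
  -- every vertex is covered by M
  have hcov : ∀ v : V, covered M v := by
    have hsv2 : ∀ f ∈ M, (Finset.univ.filter (· ∈ f)).card = 2 := by
      intro f hf
      obtain ⟨a, b, rfl⟩ := hrep f
      have hab : a ≠ b := fun h => hM.1 _ hf (Sym2.mk_isDiag_iff.mpr h)
      have hset : Finset.univ.filter (· ∈ s(a, b)) = {a, b} := by
        ext x
        simp [Sym2.mem_iff]
      rw [hset, Finset.card_pair hab]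
    have hbU : M.biUnion (fun f => Finset.univ.filter (· ∈ f)) = Finset.univ := by
      apply Finset.eq_univ_of_card
      rw [Finset.card_biUnion, hn]
      · calc ∑ f ∈ M, (Finset.univ.filter (· ∈ f)).card
            = ∑ _f ∈ M, 2 := Finset.sum_congr rfl hsv2
          _ = 2 * M.card := by rw [Finset.sum_const, smul_eq_mul, mul_comm]
          _ = 6 * k := by rw [hMcard]; omega
      · intro f hf f' hf' hne
        rw [Function.onFun, Finset.disjoint_left]
        intro x hx hx'
        rw [Finset.mem_filter] at hx hx'
        exact hMdisj f hf f' hf' hne x hx.2 hx'.2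
    intro v
    have hv : v ∈ M.biUnion (fun f => Finset.univ.filter (· ∈ f)) := by
      rw [hbU]; exact Finset.mem_univ v
    obtain ⟨f, hf, hvf⟩ := Finset.mem_biUnion.mp hv
    exact ⟨f, hf, (Finset.mem_filter.mp hvf).2⟩
  have hEm : ∀ u : V, eMatch M u ∈ M ∧ u ∈ eMatch M u := by
    intro u
    have h : ∃ e ∈ M, u ∈ e := hcov u
    simp only [eMatch, dif_pos h]
    exact ⟨h.choose_spec.1, h.choose_spec.2⟩
  -- junk values
  have hP3ne : ∀ _ : Sym2 V, Nonempty (P3 V) := by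
    intro e
    obtain ⟨a, _, rfl⟩ := hrep e
    have hk : 1 ≤ k := by
      by_contra h
      have hc0 : Fintype.card V = 0 := by omega
      exact (Fintype.card_eq_zero_iff.mp hc0).false a
    obtain ⟨y, hy⟩ : ∃ y : V, y ≠ a := Fintype.exists_ne_of_one_lt_card (by omega) a
    obtain ⟨z, hz⟩ : ∃ z : V, z ∉ ({a, y} : Finset V) := by
      by_contra h
      push_neg at h
      have hsub : (Finset.univ : Finset V) ⊆ {a, y} := fun z _ => h z
      have hle := Finset.card_le_card hsub
      have h2c : ({a, y} : Finset V).card ≤ 2 :=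
        (Finset.card_insert_le _ _).trans (by simp)
      rw [Finset.card_univ, hn] at hle
      omega
    simp only [Finset.mem_insert, Finset.mem_singleton, not_or] at hz
    exact ⟨⟨a, y, z, fun h => hy h.symm, fun h => hz.2 h.symm, fun h => hz.1 h.symm⟩⟩
  -- Choice 1 : the path through each edge of N, using the heavier matched edge
  have hch1 : ∀ e : Sym2 V, ∃ (p : P3 V) (eu ev : Sym2 V) (vv vv' : V), e ∈ N →
      eu ∈ M ∧ ev ∈ M ∧ eu ≠ ev ∧ shares eu e ∧ shares ev e ∧
      (∀ f ∈ M, shares f e → f = eu ∨ f = ev) ∧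
      vv' ∈ ev ∧
      (∀ x : V, x ∈ ev → x = vv ∨ x = vv') ∧
      vv ∈ p.verts ∧ vv' ∉ p.verts ∧
      (∀ x ∈ p.verts, x ∈ eu ∨ x ∈ ev) ∧
      (∀ x : V, x ∈ eu → x ∈ p.verts) ∧
      p.wt w = w eu + w ev + cost w M e := by
    intro e
    by_cases he : e ∈ N
    · obtain ⟨a, b, hab, habne⟩ : ∃ a b : V, e = s(a, b) ∧ a ≠ b := by
        obtain ⟨a, b, rfl⟩ := hrep e
        exact ⟨a, b, rfl, fun h => hNG _ he (Sym2.mk_isDiag_iff.mpr h)⟩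
      obtain ⟨u, v, huv, hune, hle⟩ : ∃ u v : V, e = s(u, v) ∧ u ≠ v ∧
          w (eMatch M v) ≤ w (eMatch M u) := by
        by_cases hc : w (eMatch M b) ≤ w (eMatch M a)
        · exact ⟨a, b, hab, habne, hc⟩
        · exact ⟨b, a, hab.trans Sym2.eq_swap, habne.symm, le_of_not_ge hc⟩
      have heuM : eMatch M u ∈ M := (hEm u).1
      have hevM : eMatch M v ∈ M := (hEm v).1
      have humem : u ∈ eMatch M u := (hEm u).2
      have hvmem : v ∈ eMatch M v := (hEm v).2
      have heune : eMatch M u ≠ eMatch M v := by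
        intro h
        have hveu : v ∈ eMatch M u := by rw [h]; exact hvmem
        have heq : eMatch M u = s(u, v) := (Sym2.mem_and_mem_iff hune).mp ⟨humem, hveu⟩
        exact hNM e he (by rw [huv, ← heq]; exact heuM)
      have hud : ¬ (eMatch M u).IsDiag := hM.1 _ heuM
      have hvd : ¬ (eMatch M v).IsDiag := hM.1 _ hevM
      have hu'spec : s(u, Sym2.Mem.other humem) = eMatch M u := Sym2.other_spec humem
      have hv'spec : s(v, Sym2.Mem.other hvmem) = eMatch M v := Sym2.other_spec hvmem
      set u' := Sym2.Mem.other humem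
      set v' := Sym2.Mem.other hvmem
      have hu'mem : u' ∈ eMatch M u := Sym2.other_mem humem
      have hv'mem : v' ∈ eMatch M v := Sym2.other_mem hvmem
      have hu'ne : u' ≠ u := Sym2.other_ne hud humem
      have hv'ne : v' ≠ v := Sym2.other_ne hvd hvmem
      have hdisj := hMdisj (eMatch M u) heuM (eMatch M v) hevM heune
      have hu'v : u' ≠ v := fun h => hdisj u' hu'mem (by rw [h]; exact hvmem)
      refine ⟨⟨u', u, v, hu'ne, hune, hu'v⟩, eMatch M u, eMatch M v, v, v', fun _ => ?_⟩
      have hverts : (⟨u', u, v, hu'ne, hune, hu'v⟩ : P3 V).verts = {u', u, v} := rfl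
      have hue : u ∈ e := by rw [huv]; exact Sym2.mem_mk_left u v
      have hve : v ∈ e := by rw [huv]; exact Sym2.mem_mk_right u v
      refine ⟨heuM, hevM, heune, ⟨u, humem, hue⟩, ⟨v, hvmem, hve⟩, ?_, hv'mem, ?_, ?_, ?_, ?_, ?_, ?_⟩
      · rintro f hf ⟨x, hxf, hxe⟩
        rw [huv, Sym2.mem_iff] at hxe
        rcases hxe with rfl | rfl
        · exact Or.inl (hMuniq f hf _ heuM x hxf humem)
        · exact Or.inr (hMuniq f hf _ hevM x hxf hvmem)
      · intro x hx
        rw [← hv'spec, Sym2.mem_iff] at hx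
        exact hx
      · simp [hverts]
      · simp only [hverts, Finset.mem_insert, Finset.mem_singleton]
        push_neg
        refine ⟨?_, ?_, hv'ne⟩
        · intro h
          exact hdisj v' (by rw [h]; exact hu'mem) hv'mem
        · intro h
          exact hdisj v' (by rw [h]; exact humem) hv'mem
      · intro x hx
        simp only [hverts, Finset.mem_insert, Finset.mem_singleton] at hx
        rcases hx with rfl | rfl | rfl
        · exact Or.inl hu'mem
        · exact Or.inl humem
        · exact Or.inr hvmem
      · intro x hx
        rw [← hu'spec, Sym2.mem_iff] at hx
        simp only [hverts, Finset.mem_insert, Finset.mem_singleton]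
        tauto
      · have hwA : (⟨u', u, v, hu'ne, hune, hu'v⟩ : P3 V).wt w
            = w s(u', u) + w s(u, v) := rfl
        have h1 : s(u', u) = eMatch M u := Sym2.eq_swap.trans hu'spec
        have hcost : cost w M e = w s(u, v) - w (eMatch M v) := by
          rw [huv]
          simp only [cost, Sym2.lift_mk]
          rw [if_pos ⟨hcov u, hcov v⟩, min_eq_right hle]
        rw [hwA, hcost, h1]
        ring
    · obtain ⟨p⟩ := hP3ne e
      exact ⟨p, e, e, p.x, p.x, fun h => absurd h he⟩
  choose pA eu ev vv vv' hs1 using hch1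
  have hA_euM : ∀ e ∈ N, eu e ∈ M := fun e he => ((hs1 e) he).1
  have hA_evM : ∀ e ∈ N, ev e ∈ M := fun e he => ((hs1 e) he).2.1
  have hA_ne : ∀ e ∈ N, eu e ≠ ev e := fun e he => ((hs1 e) he).2.2.1
  have hA_shu : ∀ e ∈ N, shares (eu e) e := fun e he => ((hs1 e) he).2.2.2.1
  have hA_shv : ∀ e ∈ N, shares (ev e) e := fun e he => ((hs1 e) he).2.2.2.2.1
  have hA_all : ∀ e ∈ N, ∀ f ∈ M, shares f e → f = eu e ∨ f = ev e :=
    fun e he => ((hs1 e) he).2.2.2.2.2.1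
  have hA_v'ev : ∀ e ∈ N, vv' e ∈ ev e := fun e he => ((hs1 e) he).2.2.2.2.2.2.1
  have hA_evmem : ∀ e ∈ N, ∀ x ∈ ev e, x = vv e ∨ x = vv' e :=
    fun e he => ((hs1 e) he).2.2.2.2.2.2.2.1
  have hA_vin : ∀ e ∈ N, vv e ∈ (pA e).verts := fun e he => ((hs1 e) he).2.2.2.2.2.2.2.2.1
  have hA_v'nin : ∀ e ∈ N, vv' e ∉ (pA e).verts :=
    fun e he => ((hs1 e) he).2.2.2.2.2.2.2.2.2.1
  have hA_sub : ∀ e ∈ N, ∀ x ∈ (pA e).verts, x ∈ eu e ∨ x ∈ ev e :=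
    fun e he => ((hs1 e) he).2.2.2.2.2.2.2.2.2.2.1
  have hA_eusub : ∀ e ∈ N, ∀ x : V, x ∈ eu e → x ∈ (pA e).verts :=
    fun e he => ((hs1 e) he).2.2.2.2.2.2.2.2.2.2.2.1
  have hA_wt : ∀ e ∈ N, (pA e).wt w = w (eu e) + w (ev e) + cost w M e :=
    fun e he => ((hs1 e) he).2.2.2.2.2.2.2.2.2.2.2.2
  have hcross : ∀ e ∈ N, ∀ e' ∈ N, e ≠ e' → ∀ f : Sym2 V,
      (f = eu e ∨ f = ev e) → (f = eu e' ∨ f = ev e') → False := by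
    intro e he e' he' hne f hf hf'
    have hfM : f ∈ M := by
      rcases hf with rfl | rfl
      · exact hA_euM e he
      · exact hA_evM e he
    have hsh : shares f e := by
      rcases hf with rfl | rfl
      · exact hA_shu e he
      · exact hA_shv e he
    have hsh' : shares f e' := by
      rcases hf' with rfl | rfl
      · exact hA_shu e' he'
      · exact hA_shv e' he'
    exact hne (hNsep f hfM e he e' he' hsh hsh')
  -- the touched and untouched edges of M
  set T := M.filter (fun f => ∃ e ∈ N, shares f e) with hT_def
  set U := M.filter (fun f => ¬ ∃ e ∈ N, shares f e) with hU_def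
  have hUM : ∀ f ∈ U, f ∈ M := fun f hf => (Finset.mem_filter.mp hf).1
  have hUn : ∀ f ∈ U, ∀ e ∈ N, ¬ shares f e := by
    intro f hf e he hsh
    exact (Finset.mem_filter.mp hf).2 ⟨e, he, hsh⟩
  have hTbU : T = N.biUnion (fun e => ({eu e, ev e} : Finset (Sym2 V))) := by
    ext f
    simp only [hT_def, Finset.mem_filter, Finset.mem_biUnion, Finset.mem_insert,
      Finset.mem_singleton]
    constructor
    · rintro ⟨hfM, e, he, hsh⟩
      exact ⟨e, he, hA_all e he f hfM hsh⟩
    · rintro ⟨e, he, h⟩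
      rcases h with rfl | rfl
      · exact ⟨hA_euM e he, e, he, hA_shu e he⟩
      · exact ⟨hA_evM e he, e, he, hA_shv e he⟩
  have hpairsdisj : ∀ e ∈ N, ∀ e' ∈ N, e ≠ e' →
      Disjoint ({eu e, ev e} : Finset (Sym2 V)) {eu e', ev e'} := by
    intro e he e' he' hne
    rw [Finset.disjoint_left]
    intro f hf hf'
    simp only [Finset.mem_insert, Finset.mem_singleton] at hf hf'
    exact hcross e he e' he' hne f hf hf'
  have hNk : N.card = k := by rw [hNcard]; omega
  have hTcard : T.card = 2 * k := by
    rw [hTbU, Finset.card_biUnion hpairsdisj]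
    have hc2 : ∀ e ∈ N, ({eu e, ev e} : Finset (Sym2 V)).card = 2 :=
      fun e he => Finset.card_pair (hA_ne e he)
    rw [Finset.sum_congr rfl hc2, Finset.sum_const, hNk, smul_eq_mul, mul_comm]
  have hTUdisj : Disjoint T U := by
    rw [hT_def, hU_def, Finset.disjoint_left]
    intro f hf hf'
    exact (Finset.mem_filter.mp hf').2 (Finset.mem_filter.mp hf).2
  have hTUM : T ∪ U = M := by
    rw [hT_def, hU_def]
    ext f
    simp only [Finset.mem_union, Finset.mem_filter]
    constructor
    · rintro (⟨h, _⟩ | ⟨h, _⟩) <;> exact h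
    · intro h
      by_cases hx : ∃ e ∈ N, shares f e
      · exact Or.inl ⟨h, hx⟩
      · exact Or.inr ⟨h, hx⟩
  have hUcard : U.card = k := by
    have hc : T.card + U.card = M.card := by
      rw [← Finset.card_union_of_disjoint hTUdisj, hTUM]
    rw [hMcard] at hc
    omega
  have hNU : N.card = U.card := by rw [hUcard, hNk]
  -- pairing between N and the untouched edges
  set σ := Finset.equivOfCardEq hNU with hσ_def
  set g : Sym2 V → Sym2 V := fun e => if h : e ∈ N then (σ ⟨e, h⟩ : Sym2 V) else e with hg_def
  have hgU : ∀ e ∈ N, g e ∈ U := by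
    intro e he
    simp only [hg_def, dif_pos he]
    exact (σ ⟨e, he⟩).2
  have hginj : ∀ e ∈ N, ∀ e' ∈ N, g e = g e' → e = e' := by
    intro e he e' he' h
    simp only [hg_def, dif_pos he, dif_pos he'] at h
    have h2' := σ.injective (Subtype.ext h)
    exact Subtype.mk_eq_mk.mp h2'
  have hgsurj : ∀ f ∈ U, ∃ e ∈ N, g e = f := by
    intro f hf
    obtain ⟨e, he⟩ := σ.surjective ⟨f, hf⟩
    refine ⟨e.1, e.2, ?_⟩
    simp only [hg_def, dif_pos e.2]
    rw [show (⟨e.1, e.2⟩ : {x // x ∈ N}) = e from rfl, he]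
  -- Choice 2 : the path through each untouched edge
  have hch2 : ∀ e : Sym2 V, ∃ p : P3 V, e ∈ N →
      (∀ x : V, x ∈ p.verts ↔ (x ∈ g e ∨ x = vv' e)) ∧ w (g e) ≤ p.wt w := by
    intro e
    by_cases he : e ∈ N
    · have hgeU := hgU e he
      have hgeM : g e ∈ M := hUM _ hgeU
      obtain ⟨a, b, hab⟩ := hrep (g e)
      have habne : a ≠ b := fun h => hM.1 _ hgeM (by rw [hab]; exact Sym2.mk_isDiag_iff.mpr h)
      have hv'ev := hA_v'ev e he
      have hevM := hA_evM e he
      have hevg : ev e ≠ g e := by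
        intro h
        exact hUn _ hgeU e he (by rw [← h]; exact hA_shv e he)
      have hv'ng : vv' e ∉ g e := hMdisj (ev e) hevM (g e) hgeM hevg (vv' e) hv'ev
      have hv'a : vv' e ≠ a := fun h => hv'ng (by rw [hab, h]; exact Sym2.mem_mk_left a b)
      have hv'b : vv' e ≠ b := fun h => hv'ng (by rw [hab, h]; exact Sym2.mem_mk_right a b)
      refine ⟨⟨vv' e, a, b, hv'a, habne, hv'b⟩, fun _ => ⟨?_, ?_⟩⟩
      · intro x
        simp only [P3.verts, Finset.mem_insert, Finset.mem_singleton, hab, Sym2.mem_iff]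
        tauto
      · have hwB : (⟨vv' e, a, b, hv'a, habne, hv'b⟩ : P3 V).wt w
            = w s(vv' e, a) + w s(a, b) := rfl
        rw [hwB, hab]
        have := hw s(vv' e, a)
        linarith
    · exact ⟨(hP3ne e).some, fun h => absurd h he⟩
  choose pB hs2 using hch2
  have hBmem : ∀ e ∈ N, ∀ x : V, x ∈ (pB e).verts ↔ (x ∈ g e ∨ x = vv' e) :=
    fun e he => ((hs2 e) he).1
  have hBwt : ∀ e ∈ N, w (g e) ≤ (pB e).wt w := fun e he => ((hs2 e) he).2
  -- disjointness lemmas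
  have hgtouch : ∀ e ∈ N, ∀ e' ∈ N, ∀ f : Sym2 V,
      (f = eu e' ∨ f = ev e') → g e ≠ f := by
    intro e he e' he' f hf h
    have hsh : shares (g e) e' := by
      rcases hf with rfl | rfl
      · rw [h]; exact hA_shu e' he'
      · rw [h]; exact hA_shv e' he'
    exact hUn _ (hgU e he) e' he' hsh
  have hAA : ∀ e ∈ N, ∀ e' ∈ N, e ≠ e' → Disjoint (pA e).verts (pA e').verts := by
    intro e he e' he' hne
    rw [Finset.disjoint_left]
    intro x hx hx'
    obtain h1 := hA_sub e he x hx
    obtain h2 := hA_sub e' he' x hx'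
    have hf1 : ∃ f : Sym2 V, f ∈ M ∧ x ∈ f ∧ (f = eu e ∨ f = ev e) := by
      rcases h1 with h1 | h1
      · exact ⟨eu e, hA_euM e he, h1, Or.inl rfl⟩
      · exact ⟨ev e, hA_evM e he, h1, Or.inr rfl⟩
    have hf2 : ∃ f : Sym2 V, f ∈ M ∧ x ∈ f ∧ (f = eu e' ∨ f = ev e') := by
      rcases h2 with h2 | h2
      · exact ⟨eu e', hA_euM e' he', h2, Or.inl rfl⟩
      · exact ⟨ev e', hA_evM e' he', h2, Or.inr rfl⟩
    obtain ⟨f1, hf1M, hxf1, hc1⟩ := hf1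
    obtain ⟨f2, hf2M, hxf2, hc2⟩ := hf2
    have : f1 = f2 := hMuniq f1 hf1M f2 hf2M x hxf1 hxf2
    exact hcross e he e' he' hne f1 hc1 (this ▸ hc2)
  have hAB : ∀ e ∈ N, ∀ e' ∈ N, Disjoint (pA e).verts (pB e').verts := by
    intro e he e' he'
    rw [Finset.disjoint_left]
    intro x hx hx'
    obtain h1 := hA_sub e he x hx
    have hf1 : ∃ f : Sym2 V, f ∈ M ∧ x ∈ f ∧ (f = eu e ∨ f = ev e) := by
      rcases h1 with h1 | h1
      · exact ⟨eu e, hA_euM e he, h1, Or.inl rfl⟩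
      · exact ⟨ev e, hA_evM e he, h1, Or.inr rfl⟩
    obtain ⟨f1, hf1M, hxf1, hc1⟩ := hf1
    rcases (hBmem e' he' x).mp hx' with h2 | h2
    · -- x ∈ g e'
      have : g e' = f1 := hMuniq (g e') (hUM _ (hgU e' he')) f1 hf1M x h2 hxf1
      exact hgtouch e' he' e he f1 hc1 this
    · -- x = vv' e'
      by_cases hee : e = e'
      · subst hee
        exact hA_v'nin e he (h2 ▸ hx)
      · have hxev : x ∈ ev e' := by rw [h2]; exact hA_v'ev e' he'
        have : f1 = ev e' := hMuniq f1 hf1M (ev e') (hA_evM e' he') x hxf1 hxev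
        exact hcross e he e' he' hee f1 hc1 (Or.inr this)
  have hBB : ∀ e ∈ N, ∀ e' ∈ N, e ≠ e' → Disjoint (pB e).verts (pB e').verts := by
    intro e he e' he' hne
    rw [Finset.disjoint_left]
    intro x hx hx'
    rcases (hBmem e he x).mp hx with h1 | h1 <;>
      rcases (hBmem e' he' x).mp hx' with h2 | h2
    · have : g e = g e' :=
        hMuniq (g e) (hUM _ (hgU e he)) (g e') (hUM _ (hgU e' he')) x h1 h2
      exact hne (hginj e he e' he' this)
    · have hxev : x ∈ ev e' := by rw [h2]; exact hA_v'ev e' he'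
      have : g e = ev e' :=
        hMuniq (g e) (hUM _ (hgU e he)) (ev e') (hA_evM e' he') x h1 hxev
      exact hgtouch e he e' he' (ev e') (Or.inr rfl) this
    · have hxev : x ∈ ev e := by rw [h1]; exact hA_v'ev e he
      have : g e' = ev e :=
        hMuniq (g e') (hUM _ (hgU e' he')) (ev e) (hA_evM e he) x h2 hxev
      exact hgtouch e' he' e he (ev e) (Or.inr rfl) this
    · have hxev : x ∈ ev e := by rw [h1]; exact hA_v'ev e he
      have hxev' : x ∈ ev e' := by rw [h2]; exact hA_v'ev e' he'
      have : ev e = ev e' := hMuniq (ev e) (hA_evM e he) (ev e') (hA_evM e' he') x hxev hxev'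
      exact hcross e he e' he' hne (ev e) (Or.inr rfl) (Or.inr this)
  have hvne : ∀ p : P3 V, p.verts.Nonempty := fun p => ⟨p.x, by simp [P3.verts]⟩
  have hABne : ∀ e ∈ N, ∀ e' ∈ N, pA e ≠ pB e' := by
    intro e he e' he' h
    have hd := hAB e he e' he'
    rw [h] at hd
    obtain ⟨x, hx⟩ := hvne (pB e')
    exact Finset.disjoint_left.mp hd hx hx
  have hAinj : ∀ e ∈ N, ∀ e' ∈ N, pA e = pA e' → e = e' := by
    intro e he e' he' h
    by_contra hne
    have hd := hAA e he e' he' hne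
    rw [h] at hd
    obtain ⟨x, hx⟩ := hvne (pA e')
    exact Finset.disjoint_left.mp hd hx hx
  have hBinj : ∀ e ∈ N, ∀ e' ∈ N, pB e = pB e' → e = e' := by
    intro e he e' he' h
    by_contra hne
    have hd := hBB e he e' he' hne
    rw [h] at hd
    obtain ⟨x, hx⟩ := hvne (pB e')
    exact Finset.disjoint_left.mp hd hx hx
  have himdisj : Disjoint (N.image pA) (N.image pB) := by
    rw [Finset.disjoint_left]
    rintro p hp hp'
    obtain ⟨e, he, rfl⟩ := Finset.mem_image.mp hp
    obtain ⟨e', he', heq⟩ := Finset.mem_image.mp hp'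
    exact hABne e he e' he' heq.symm
  refine ⟨N.image pA ∪ N.image pB, ⟨?_, ?_, ?_⟩, ?_⟩
  · -- cardinality
    rw [Finset.card_union_of_disjoint himdisj,
      Finset.card_image_of_injOn (fun x hx y hy h => hAinj x hx y hy h),
      Finset.card_image_of_injOn (fun x hx y hy h => hBinj x hx y hy h), hNk, hn]
    omega
  · -- pairwise disjoint
    intro p hp q hq hpq
    rw [Finset.mem_union] at hp hq
    rcases hp with hp | hp
    · obtain ⟨e, he, rfl⟩ := Finset.mem_image.mp hp
      rcases hq with hq | hq
      · obtain ⟨e', he', rfl⟩ := Finset.mem_image.mp hq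
        exact hAA e he e' he' (fun h => hpq (by rw [h]))
      · obtain ⟨e', he', rfl⟩ := Finset.mem_image.mp hq
        exact hAB e he e' he'
    · obtain ⟨e, he, rfl⟩ := Finset.mem_image.mp hp
      rcases hq with hq | hq
      · obtain ⟨e', he', rfl⟩ := Finset.mem_image.mp hq
        exact (hAB e' he' e he).symm
      · obtain ⟨e', he', rfl⟩ := Finset.mem_image.mp hq
        exact hBB e he e' he' (fun h => hpq (by rw [h]))
  · -- covering
    intro x
    obtain ⟨f, hfM, hxf⟩ := hcov x
    by_cases hft : ∃ e ∈ N, shares f e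
    · obtain ⟨e, he, hsh⟩ := hft
      rcases hA_all e he f hfM hsh with rfl | rfl
      · exact ⟨pA e, Finset.mem_union_left _ (Finset.mem_image_of_mem _ he),
          hA_eusub e he x hxf⟩
      · rcases hA_evmem e he x hxf with rfl | rfl
        · exact ⟨pA e, Finset.mem_union_left _ (Finset.mem_image_of_mem _ he), hA_vin e he⟩
        · exact ⟨pB e, Finset.mem_union_right _ (Finset.mem_image_of_mem _ he),
            (hBmem e he _).mpr (Or.inr rfl)⟩
    · have hfU : f ∈ U := Finset.mem_filter.mpr ⟨hfM, hft⟩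
      obtain ⟨e, he, rfl⟩ := hgsurj f hfU
      exact ⟨pB e, Finset.mem_union_right _ (Finset.mem_image_of_mem _ he),
        (hBmem e he x).mpr (Or.inl hxf)⟩
  · -- weight
    have hsumA : ∑ p ∈ N.image pA, p.wt w = ∑ e ∈ N, (pA e).wt w :=
      Finset.sum_image (fun x hx y hy h => hAinj x hx y hy h)
    have hsumB : ∑ p ∈ N.image pB, p.wt w = ∑ e ∈ N, (pB e).wt w :=
      Finset.sum_image (fun x hx y hy h => hBinj x hx y hy h)
    have hpw : pw w (N.image pA ∪ N.image pB)
        = ∑ e ∈ N, (pA e).wt w + ∑ e ∈ N, (pB e).wt w := by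
      rw [pw, Finset.sum_union himdisj, hsumA, hsumB]
    have hwtA : ∑ e ∈ N, (pA e).wt w
        = ∑ e ∈ N, (w (eu e) + w (ev e)) + cw w M N := by
      rw [cw, ← Finset.sum_add_distrib]
      exact Finset.sum_congr rfl (fun e he => hA_wt e he)
    have hwtB : ∑ e ∈ N, w (g e) ≤ ∑ e ∈ N, (pB e).wt w :=
      Finset.sum_le_sum (fun e he => hBwt e he)
    have hU_sum : ∑ e ∈ N, w (g e) = ∑ f ∈ U, w f := by
      rw [← Finset.sum_image (g := g) (fun x hx y hy h => hginj x hx y hy h)]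
      congr 1
      apply Finset.eq_of_subset_of_card_le
      · intro f hf
        obtain ⟨e, he, rfl⟩ := Finset.mem_image.mp hf
        exact hgU e he
      · rw [Finset.card_image_of_injOn (fun x hx y hy h => hginj x hx y hy h), hNk, hUcard]
    have hT_sum : ∑ f ∈ T, w f = ∑ e ∈ N, (w (eu e) + w (ev e)) := by
      rw [hTbU, Finset.sum_biUnion]
      · exact Finset.sum_congr rfl (fun e he => Finset.sum_pair (hA_ne e he))
      · intro a ha b hb hab
        exact hpairsdisj a ha b hb hab
    have hM_sum : ew w M = ∑ f ∈ T, w f + ∑ f ∈ U, w f := by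
      rw [ew, ← hTUM, Finset.sum_union hTUdisj]
    rw [hpw, hwtA, hM_sum, hT_sum]
    linarith

end MW3PP
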